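/- arXiv:0809.4084 — 3 statements merged into one kernel-verified Lean document; each statement's English description precedes it below -/
import Mathlib

section
/- Vanishing of the principal-value inverse Laplace integral on a left contour: For all real t > 0 and θ > 0, the limit as R → ∞ of ∫_{−R}^{R} e^{(−θ + i s) t} / (−θ + i s) ds exists and equals 0. -/
open Complex Filter
open MeasureTheory Set Real

lemma exp_decay_integrableOn (t : ℝ) {z : ℂ} (hz : z.re < 0) :
    IntegrableOn (fun v : ℝ => Complex.exp (z * v)) (Set.Ioi t) := by
  have hg : IntegrableOn (fun v : ℝ => Real.exp (z.re * v)) (Set.Ioi t) := by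
    have := exp_neg_integrableOn_Ioi t (show 0 < -z.re by linarith)
    simpa using this
  apply Integrable.mono' hg
  · exact (Complex.continuous_exp.comp
      (continuous_const.mul Complex.continuous_ofReal)).aestronglyMeasurable
  · filter_upwards with v
    simp [Complex.norm_exp, Complex.mul_re, mul_comm]

lemma exp_decay_integral_Ioi (t : ℝ) {z : ℂ} (hz : z.re < 0) :
    ∫ v in Set.Ioi t, Complex.exp (z * v) = -Complex.exp (z * t) / z := by
  have hz0 : z ≠ 0 := fun h => by simp [h] at hz
  have D : ∀ x : ℝ, HasDerivAt (fun y : ℝ => Complex.exp (z * y) / z)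
      (Complex.exp (z * x)) x := by
    intro x
    rw [← mul_div_cancel_right₀ (Complex.exp (z * x)) hz0]
    apply ((Complex.hasDerivAt_exp _).comp x _).div_const z
    simpa only [mul_one, id] using ((hasDerivAt_id (x : ℂ)).const_mul z).comp_ofReal
  have htend : Tendsto (fun v : ℝ => Complex.exp (z * v) / z) atTop (nhds 0) := by
    rw [tendsto_zero_iff_norm_tendsto_zero]
    have h1 : Tendsto (fun v : ℝ => z.re * v) atTop atBot := by
      have h0 := (tendsto_id (α := ℝ)).const_mul_atTop (show 0 < -z.re by linarith)
      have h2 := tendsto_neg_atTop_atBot.comp h0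
      refine h2.congr fun v => by simp
    have h3 : Tendsto (fun v : ℝ => Real.exp (z.re * v)) atTop (nhds 0) :=
      Real.tendsto_exp_atBot.comp h1
    have h4 : Tendsto (fun v : ℝ => Real.exp (z.re * v) / ‖z‖) atTop (nhds 0) := by
      simpa using h3.div_const (‖z‖)
    refine h4.congr fun v => by
      simp [Complex.norm_exp, Complex.mul_re]
  have := integral_Ioi_of_hasDerivAt_of_tendsto' (f := fun v : ℝ => Complex.exp (z * v) / z)
    (f' := fun v : ℝ => Complex.exp (z * v)) (a := t)
    (fun x _ => D x) (exp_decay_integrableOn t hz) htend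
  rw [this]; ring

lemma mod_integrableOn {t θ : ℝ} (ht : 0 < t) (hθ : 0 < θ) (c : ℝ) :
    IntegrableOn (fun v : ℝ => Complex.exp ((c * v : ℝ) * Complex.I) *
      (Complex.exp (-(θ : ℂ) * v) / (Complex.I * v))) (Set.Ioi t) := by
  have hg : IntegrableOn (fun v : ℝ => (1 / t) * Real.exp (-θ * v)) (Set.Ioi t) :=
    (exp_neg_integrableOn_Ioi t hθ).const_mul _
  apply Integrable.mono' hg
  · apply Measurable.aestronglyMeasurable
    have m1 : Measurable fun v : ℝ => Complex.exp ((c * v : ℝ) * Complex.I) :=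
      (Complex.continuous_exp.comp
        ((Complex.continuous_ofReal.comp (continuous_const.mul continuous_id)).mul
          continuous_const)).measurable
    have m2 : Measurable fun v : ℝ => Complex.exp (-(θ : ℂ) * v) :=
      (Complex.continuous_exp.comp
        (continuous_const.mul Complex.continuous_ofReal)).measurable
    have m3 : Measurable fun v : ℝ => Complex.I * (v : ℂ) :=
      (continuous_const.mul Complex.continuous_ofReal).measurable
    exact m1.mul (m2.div m3)
  · rw [ae_restrict_iff' measurableSet_Ioi]
    filter_upwards with v hv
    have hv0 : 0 < v := ht.trans hv
    have h1 : ‖Complex.exp ((c * v : ℝ) * Complex.I)‖ = 1 := by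
      simp [Complex.norm_exp]
    have h2 : ‖Complex.exp (-(θ : ℂ) * v)‖ = Real.exp (-θ * v) := by
      simp [Complex.norm_exp, Complex.mul_re]
    have h3 : ‖(Complex.I * (v : ℂ))‖ = v := by
      simp [abs_of_pos hv0]
    rw [norm_mul, h1, one_mul, norm_div, h2, h3, div_le_iff₀ hv0]
    have he := Real.exp_pos (-θ * v)
    have hv' : t < v := hv
    rw [div_mul_eq_mul_div, div_mul_eq_mul_div, le_div_iff₀ ht]
    nlinarith

lemma key_eq {t θ : ℝ} (ht : 0 < t) (hθ : 0 < θ) {R : ℝ} (hR : 0 ≤ R) :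
    (∫ s in (-R)..R, Complex.exp (((-θ : ℂ) + s * Complex.I) * t) /
        ((-θ : ℂ) + s * Complex.I))
    = (∫ v in Set.Ioi t, Complex.exp ((-R * v : ℝ) * Complex.I) *
        (Complex.exp (-(θ : ℂ) * v) / (Complex.I * v)))
      - ∫ v in Set.Ioi t, Complex.exp ((R * v : ℝ) * Complex.I) *
        (Complex.exp (-(θ : ℂ) * v) / (Complex.I * v)) := by
  have hle : -R ≤ R := by linarith
  have hre : ∀ s : ℝ, ((-θ : ℂ) + s * Complex.I).re < 0 := by
    intro s; simp [Complex.add_re]; linarith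
  have hInt : Integrable (Function.uncurry fun s v : ℝ =>
      Complex.exp (((-θ : ℂ) + s * Complex.I) * v))
      ((volume.restrict (Set.Ioc (-R) R)).prod (volume.restrict (Set.Ioi t))) := by
    have hcont : Continuous fun p : ℝ × ℝ =>
        Complex.exp (((-θ : ℂ) + p.1 * Complex.I) * p.2) := by
      apply Complex.continuous_exp.comp
      exact (continuous_const.add ((Complex.continuous_ofReal.comp
        continuous_fst).mul continuous_const)).mul
        (Complex.continuous_ofReal.comp continuous_snd)
    refine (MeasureTheory.integrable_prod_iff hcont.aestronglyMeasurable).mpr ⟨?_, ?_⟩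
    · filter_upwards with s
      exact exp_decay_integrableOn t (hre s)
    · have hconst : (fun s : ℝ => ∫ v in Set.Ioi t,
          ‖Complex.exp (((-θ : ℂ) + s * Complex.I) * v)‖)
          = fun _ : ℝ => ∫ v in Set.Ioi t, Real.exp (-θ * v) := by
        funext s
        apply integral_congr_ae
        filter_upwards with v
        simp [Complex.norm_exp, Complex.add_re, Complex.mul_re]
      rw [hconst]
      exact (integrableOn_const_iff).mpr (Or.inr measure_Ioc_lt_top)
  calc (∫ s in (-R)..R, Complex.exp (((-θ : ℂ) + s * Complex.I) * t) /
        ((-θ : ℂ) + s * Complex.I))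
      = ∫ s in (-R)..R, -(∫ v in Set.Ioi t,
          Complex.exp (((-θ : ℂ) + s * Complex.I) * v)) := by
        apply intervalIntegral.integral_congr
        intro s _
        beta_reduce
        rw [exp_decay_integral_Ioi t (hre s)]
        ring
    _ = -∫ s in (-R)..R, ∫ v in Set.Ioi t,
          Complex.exp (((-θ : ℂ) + s * Complex.I) * v) := by
        rw [intervalIntegral.integral_neg]
    _ = -∫ s in Set.Ioc (-R) R, ∫ v in Set.Ioi t,
          Complex.exp (((-θ : ℂ) + s * Complex.I) * v) := by
        rw [intervalIntegral.integral_of_le hle]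
    _ = -∫ v in Set.Ioi t, ∫ s in Set.Ioc (-R) R,
          Complex.exp (((-θ : ℂ) + s * Complex.I) * v) := by
        rw [MeasureTheory.integral_integral_swap hInt]
    _ = -∫ v in Set.Ioi t, Complex.exp (-(θ : ℂ) * v) *
          ((Complex.exp (Complex.I * v * R) - Complex.exp (Complex.I * v * (-R : ℝ))) /
            (Complex.I * v)) := by
        congr 1
        apply setIntegral_congr_fun measurableSet_Ioi
        intro v hv
        beta_reduce
        have hv0 : (Complex.I * (v : ℂ)) ≠ 0 := by
          simp [Complex.I_ne_zero]
          exact ne_of_gt (ht.trans hv)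
        rw [← intervalIntegral.integral_of_le hle]
        have harg : ∀ s : ℝ, ((-θ : ℂ) + s * Complex.I) * v
            = -(θ : ℂ) * v + (Complex.I * v) * s := by intro s; ring
        calc (∫ s in (-R)..R, Complex.exp (((-θ : ℂ) + s * Complex.I) * v))
            = ∫ s in (-R)..R, Complex.exp (-(θ : ℂ) * v) *
                Complex.exp ((Complex.I * v) * s) := by
              apply intervalIntegral.integral_congr
              intro s _
              beta_reduce
              rw [harg s, Complex.exp_add]
          _ = Complex.exp (-(θ : ℂ) * v) *
                ∫ s in (-R)..R, Complex.exp ((Complex.I * v) * s) := by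
              rw [intervalIntegral.integral_const_mul]
          _ = _ := by rw [integral_exp_mul_complex hv0]
    _ = ∫ v in Set.Ioi t, (Complex.exp ((-R * v : ℝ) * Complex.I) *
          (Complex.exp (-(θ : ℂ) * v) / (Complex.I * v))
          - Complex.exp ((R * v : ℝ) * Complex.I) *
          (Complex.exp (-(θ : ℂ) * v) / (Complex.I * v))) := by
        rw [← integral_neg]
        apply setIntegral_congr_fun measurableSet_Ioi
        intro v hv
        have h1 : ((-R * v : ℝ) : ℂ) * Complex.I = Complex.I * v * (-R : ℝ) := by
          push_cast; ring
        have h2 : ((R * v : ℝ) : ℂ) * Complex.I = Complex.I * v * R := by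
          push_cast; ring
        beta_reduce
        rw [h1, h2]
        ring
    _ = _ := integral_sub (mod_integrableOn ht hθ (-R)) (mod_integrableOn ht hθ R)

/-- The principal-value inverse Laplace integral on a left contour vanishes:
for `t, θ > 0`, `lim_{R→∞} ∫_{-R}^{R} e^{(−θ+is)t}/(−θ+is) ds = 0`. -/
theorem pv_inverse_laplace_left_contour (t θ : ℝ) (ht : 0 < t) (hθ : 0 < θ) :
    Tendsto (fun R : ℝ =>
      ∫ s in (-R)..R, Complex.exp (((-θ : ℂ) + s * Complex.I) * t) /
        ((-θ : ℂ) + s * Complex.I))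
      atTop (nhds 0) := by
  set g : ℝ → ℂ := fun v => Complex.exp (-(θ : ℂ) * v) / (Complex.I * v) with hg
  set h : ℝ → ℂ := (Set.Ioi t).indicator g with hh
  have hπ : (0 : ℝ) < 2 * Real.pi := by positivity
  have hRL : Tendsto (fun w : ℝ => ∫ v : ℝ, Real.fourierChar (-(v * w)) • h v)
      (cocompact ℝ) (nhds 0) := Real.tendsto_integral_exp_smul_cocompact h
  -- B c = the RL integral at w = -c/(2π)
  have hBeq : ∀ c : ℝ, (∫ v : ℝ, Real.fourierChar (-(v * (-c / (2 * Real.pi)))) • h v)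
      = ∫ v in Set.Ioi t, Complex.exp ((c * v : ℝ) * Complex.I) * g v := by
    intro c
    have hfun : (fun v : ℝ => Real.fourierChar (-(v * (-c / (2 * Real.pi)))) • h v)
        = (Set.Ioi t).indicator
          (fun v => Complex.exp ((c * v : ℝ) * Complex.I) * g v) := by
      funext v
      by_cases hv : v ∈ Set.Ioi t
      · simp only [hh, Set.indicator_of_mem hv, Circle.smul_def, Real.fourierChar_apply]
        have harg : 2 * Real.pi * -(v * (-c / (2 * Real.pi))) = c * v := by
          field_simp
        rw [harg, smul_eq_mul]
      · simp [hh, Set.indicator_of_notMem hv]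
    rw [hfun, integral_indicator measurableSet_Ioi]
  have hcocompact : atTop ≤ cocompact ℝ := by
    rw [cocompact_eq_atBot_atTop]; exact le_sup_right
  have hcocompact' : atBot ≤ cocompact ℝ := by
    rw [cocompact_eq_atBot_atTop]; exact le_sup_left
  -- tendsto of the two parameter maps
  have t1 : Tendsto (fun R : ℝ => -(-R) / (2 * Real.pi)) atTop (cocompact ℝ) := by
    apply Tendsto.mono_right _ hcocompact
    have : Tendsto (fun R : ℝ => R / (2 * Real.pi)) atTop atTop :=
      tendsto_id.atTop_div_const hπ
    exact this.congr fun R => by ring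
  have t2 : Tendsto (fun R : ℝ => -R / (2 * Real.pi)) atTop (cocompact ℝ) := by
    apply Tendsto.mono_right _ hcocompact'
    have h0 : Tendsto (fun R : ℝ => R / (2 * Real.pi)) atTop atTop :=
      tendsto_id.atTop_div_const hπ
    exact (tendsto_neg_atTop_atBot.comp h0).congr fun R => by simp; ring
  have hA : Tendsto (fun R : ℝ =>
      ∫ v in Set.Ioi t, Complex.exp ((-R * v : ℝ) * Complex.I) * g v) atTop (nhds 0) := by
    have := hRL.comp t1
    refine this.congr fun R => ?_
    simpa using hBeq (-R)
  have hB : Tendsto (fun R : ℝ =>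
      ∫ v in Set.Ioi t, Complex.exp ((R * v : ℝ) * Complex.I) * g v) atTop (nhds 0) := by
    have := hRL.comp t2
    refine this.congr fun R => ?_
    simpa using hBeq R
  have := hA.sub hB
  rw [sub_zero] at this
  apply this.congr'
  filter_upwards [eventually_ge_atTop (0 : ℝ)] with R hR
  exact (key_eq ht hθ hR).symm
end

section
/- Shift estimate for the background profile (core of Lemma 5.2): Let 1 ≤ p < ∞, N ≥ 1, d ≥ 2. Let Ū : ℝ → ℝ^N be continuously differentiable with derivative Ū' belonging to L^p(ℝ), and let δ : ℝ^{d−1} → ℝ be measurable with δ ∈ L^p(ℝ^{d−1}). Then the function (x₁, x̃) ↦ Ū(x₁) − Ū(x₁ − δ(x̃)) belongs to L^p(ℝ^d) and its L^p(ℝ^d) norm is at most ‖Ū'‖_{L^p(ℝ)} · ‖δ‖_{L^p(ℝ^{d−1})}. -/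
open MeasureTheory ENNReal NNReal

/-- The set of `x` such that `t` lies in `Ι (x - s) x` is an interval of length `|s|`. -/
lemma shift_set_eq (s t : ℝ) :
    {x : ℝ | t ∈ Set.uIoc (x - s) x} = Set.Ico (min t (t + s)) (max t (t + s)) := by
  ext x
  simp only [Set.mem_setOf_eq]
  rcases le_or_gt 0 s with hs | hs
  · simp only [Set.mem_setOf_eq, Set.uIoc_of_le (by linarith : x - s ≤ x), Set.mem_Ioc,
      Set.mem_Ico, min_eq_left (by linarith : t ≤ t + s), max_eq_right (by linarith : t ≤ t + s)]
    constructor <;> rintro ⟨h1, h2⟩ <;> exact ⟨by linarith, by linarith⟩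
  · rw [Set.uIoc_comm]
    simp only [Set.mem_setOf_eq, Set.uIoc_of_le (by linarith : x ≤ x - s), Set.mem_Ioc,
      Set.mem_Ico, min_eq_right (by linarith : t + s ≤ t), max_eq_left (by linarith : t + s ≤ t)]
    constructor <;> rintro ⟨h1, h2⟩ <;> exact ⟨by linarith, by linarith⟩

lemma shift_set_meas (s t : ℝ) : volume {x : ℝ | t ∈ Set.uIoc (x - s) x} = ENNReal.ofReal |s| := by
  rw [shift_set_eq, Real.volume_Ico]
  congr 1
  rcases le_or_gt 0 s with hs | hs
  · rw [min_eq_left (by linarith : t ≤ t + s), max_eq_right (by linarith : t ≤ t + s),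
      abs_of_nonneg hs]; ring
  · rw [min_eq_right (by linarith : t + s ≤ t), max_eq_left (by linarith : t + s ≤ t),
      abs_of_neg hs]; ring

lemma vol_uIoc (a s : ℝ) : volume (Set.uIoc (a - s) a) = ENNReal.ofReal |s| := by
  rcases le_or_gt 0 s with hs | hs
  · rw [Set.uIoc_of_le (by linarith : a - s ≤ a), Real.volume_Ioc, abs_of_nonneg hs]
    congr 1; ring
  · rw [Set.uIoc_comm, Set.uIoc_of_le (by linarith : a ≤ a - s), Real.volume_Ioc, abs_of_neg hs]
    congr 1; ring

/-- One-dimensional shift estimate for a fixed shift `s`. -/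
lemma oneD_shift {p : ℝ} (hp : 1 ≤ p) {N : ℕ} (U : ℝ → EuclideanSpace ℝ (Fin N))
    (hU : ContDiff ℝ 1 U) (s : ℝ) :
    ∫⁻ x : ℝ, (‖U x - U (x - s)‖₊ : ℝ≥0∞) ^ p
      ≤ ENNReal.ofReal |s| ^ p * ∫⁻ t : ℝ, (‖deriv U t‖₊ : ℝ≥0∞) ^ p := by
  have hp0 : 0 < p := lt_of_lt_of_le one_pos hp
  rcases eq_or_ne s 0 with rfl | hs
  · have h0 : ∀ x : ℝ, (‖U x - U (x - 0)‖₊ : ℝ≥0∞) ^ p = 0 := by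
      intro x
      simp [ENNReal.zero_rpow_of_pos hp0]
    simp only [h0, lintegral_zero]
    exact bot_le
  set C : ℝ≥0∞ := ENNReal.ofReal |s| with hCdef
  have hC0 : C ≠ 0 := by
    simp [hCdef, ENNReal.ofReal_eq_zero, not_le, abs_pos.mpr hs, hs]
  have hCt : C ≠ ⊤ := ENNReal.ofReal_ne_top
  have hU'c : Continuous (deriv U) := hU.continuous_deriv le_rfl
  set g : ℝ → ℝ≥0∞ := fun t => (‖deriv U t‖₊ : ℝ≥0∞) ^ p with hgdef
  have hgm : Measurable g :=
    ENNReal.continuous_rpow_const.measurable.comp hU'c.measurable.nnnorm.coe_nnreal_ennreal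
  set K : ℝ → ℝ≥0∞ := fun x => ∫⁻ t in Set.uIoc (x - s) x, g t with hKdef
  -- pointwise estimate
  have key : ∀ x : ℝ, (‖U x - U (x - s)‖₊ : ℝ≥0∞) ^ p ≤ K x * C ^ (p - 1) := by
    intro x
    have hftc : U x - U (x - s) = ∫ t in (x - s)..x, deriv U t := by
      rw [intervalIntegral.integral_deriv_eq_sub
        (fun t _ => (hU.differentiable one_ne_zero).differentiableAt)
        (hU'c.intervalIntegrable _ _)]
    have h1 : (‖U x - U (x - s)‖₊ : ℝ≥0∞)
        ≤ ∫⁻ t in Set.uIoc (x - s) x, (‖deriv U t‖₊ : ℝ≥0∞) := by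
      rw [hftc]
      calc (‖∫ t in (x - s)..x, deriv U t‖₊ : ℝ≥0∞)
          = ‖∫ t in Set.uIoc (x - s) x, deriv U t‖₊ := by
            rw [intervalIntegral.intervalIntegral_eq_integral_uIoc]
            split_ifs <;> simp
        _ ≤ _ := enorm_integral_le_lintegral_enorm _
    have h2 : ∫⁻ t in Set.uIoc (x - s) x, (‖deriv U t‖₊ : ℝ≥0∞)
        ≤ K x ^ (1 / p) * C ^ (1 - 1 / p) := by
      have h := eLpNorm'_le_eLpNorm'_mul_rpow_measure_univ (p := 1) (q := p) one_pos hp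
        (f := deriv U) (μ := volume.restrict (Set.uIoc (x - s) x))
        hU'c.aestronglyMeasurable
      simp only [eLpNorm', ENNReal.rpow_one] at h
      rw [Measure.restrict_apply_univ, vol_uIoc] at h
      simpa [hKdef, hCdef, hgdef, enorm_eq_nnnorm] using h
    calc (‖U x - U (x - s)‖₊ : ℝ≥0∞) ^ p
        ≤ (K x ^ (1 / p) * C ^ (1 - 1 / p)) ^ p :=
          ENNReal.rpow_le_rpow (h1.trans h2) hp0.le
      _ = K x * C ^ (p - 1) := by
          rw [ENNReal.mul_rpow_of_nonneg _ _ hp0.le, ← ENNReal.rpow_mul, ← ENNReal.rpow_mul,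
            one_div_mul_cancel hp0.ne', ENNReal.rpow_one]
          congr 1
          field_simp
  -- Fubini step
  have hfub : ∫⁻ x, K x = C * ∫⁻ t, g t := by
    set A : Set (ℝ × ℝ) := {q : ℝ × ℝ | q.2 ∈ Set.uIoc (q.1 - s) q.1} with hAdef
    have hA : MeasurableSet A := by
      have hAeq : A = {q : ℝ × ℝ | min (q.1 - s) q.1 < q.2} ∩
          {q : ℝ × ℝ | q.2 ≤ max (q.1 - s) q.1} := by
        ext q
        simp [hAdef, Set.uIoc, Set.mem_Ioc, min_def, max_def]
      rw [hAeq]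
      exact (measurableSet_lt ((measurable_fst.sub measurable_const).min measurable_fst)
          measurable_snd).inter
        (measurableSet_le measurable_snd
          ((measurable_fst.sub measurable_const).max measurable_fst))
    have hmeasA : Measurable (fun q : ℝ × ℝ => A.indicator (fun q : ℝ × ℝ => g q.2) q) :=
      (hgm.comp measurable_snd).indicator hA
    have hswap := lintegral_lintegral_swap (μ := volume) (ν := volume)
      (f := fun x t => A.indicator (fun q : ℝ × ℝ => g q.2) (x, t))
      (by exact hmeasA.aemeasurable)
    calc ∫⁻ x, K x
        = ∫⁻ x, ∫⁻ t, A.indicator (fun q : ℝ × ℝ => g q.2) (x, t) := by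
          refine lintegral_congr fun x => ?_
          have hKx : K x = ∫⁻ t in Set.uIoc (x - s) x, g t := rfl
          rw [hKx, ← lintegral_indicator measurableSet_uIoc]
          refine lintegral_congr fun t => ?_
          by_cases h : t ∈ Set.uIoc (x - s) x
          · rw [Set.indicator_of_mem h, Set.indicator_of_mem (by exact h)]
          · rw [Set.indicator_of_notMem h, Set.indicator_of_notMem (by exact h)]
      _ = ∫⁻ t, ∫⁻ x, A.indicator (fun q : ℝ × ℝ => g q.2) (x, t) := hswap
      _ = ∫⁻ t, g t * C := by
          refine lintegral_congr fun t => ?_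
          have hrw : ∀ x : ℝ, A.indicator (fun q : ℝ × ℝ => g q.2) (x, t)
              = Set.indicator {x : ℝ | t ∈ Set.uIoc (x - s) x} (fun _ => g t) x := by
            intro x
            by_cases h : t ∈ Set.uIoc (x - s) x
            · rw [Set.indicator_of_mem (by exact h), Set.indicator_of_mem (by exact h)]
            · rw [Set.indicator_of_notMem (by exact h), Set.indicator_of_notMem (by exact h)]
          simp only [hrw]
          rw [lintegral_indicator (by rw [shift_set_eq]; exact measurableSet_Ico),
            setLIntegral_const, shift_set_meas]
      _ = C * ∫⁻ t, g t := by
          rw [lintegral_mul_const' C _ hCt, mul_comm]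
  calc ∫⁻ x, (‖U x - U (x - s)‖₊ : ℝ≥0∞) ^ p
      ≤ ∫⁻ x, K x * C ^ (p - 1) := lintegral_mono key
    _ = ∫⁻ x, C ^ (p - 1) * K x := by simp_rw [mul_comm]
    _ = C ^ (p - 1) * ∫⁻ x, K x :=
        lintegral_const_mul' _ _ (ENNReal.rpow_ne_top_of_nonneg (by linarith) hCt)
    _ = C ^ (p - 1) * (C * ∫⁻ t, g t) := by rw [hfub]
    _ = C ^ p * ∫⁻ t, g t := by
        rw [← mul_assoc]
        congr 1
        have h := ENNReal.rpow_add (p - 1) 1 hC0 hCt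
        rw [ENNReal.rpow_one] at h
        rw [← h]
        norm_num

/-- Shift estimate for the background profile: if `Ū ∈ C¹(ℝ, ℝ^N)` with `Ū' ∈ Lᵖ(ℝ)` and
`δ ∈ Lᵖ(ℝ^{d−1})` is measurable, then `(x₁, x̃) ↦ Ū(x₁) − Ū(x₁ − δ(x̃))` is in `Lᵖ(ℝ^d)`
with norm at most `‖Ū'‖_{Lᵖ} · ‖δ‖_{Lᵖ}`. -/
theorem shift_estimate (p : ℝ) (hp : 1 ≤ p) (N d : ℕ) (hN : 1 ≤ N) (hd : 2 ≤ d)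
    (U : ℝ → EuclideanSpace ℝ (Fin N)) (hU : ContDiff ℝ 1 U)
    (hU' : MemLp (deriv U) (ENNReal.ofReal p) volume)
    (δ : (Fin (d - 1) → ℝ) → ℝ) (hδmeas : Measurable δ)
    (hδ : MemLp δ (ENNReal.ofReal p) volume) :
    MemLp (fun x : ℝ × (Fin (d - 1) → ℝ) => U x.1 - U (x.1 - δ x.2))
        (ENNReal.ofReal p) volume ∧
      eLpNorm (fun x : ℝ × (Fin (d - 1) → ℝ) => U x.1 - U (x.1 - δ x.2))
          (ENNReal.ofReal p) volume
        ≤ eLpNorm (deriv U) (ENNReal.ofReal p) volume *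
            eLpNorm δ (ENNReal.ofReal p) volume := by
  have hp0 : 0 < p := lt_of_lt_of_le one_pos hp
  set P : ℝ≥0∞ := ENNReal.ofReal p with hPdef
  have hP0 : P ≠ 0 := by simp [hPdef, ENNReal.ofReal_eq_zero, not_le, hp0]
  have hPt : P ≠ ⊤ := ENNReal.ofReal_ne_top
  have hPr : P.toReal = p := ENNReal.toReal_ofReal hp0.le
  have hUc : Continuous U := hU.continuous
  have hFmeas : Measurable (fun x : ℝ × (Fin (d - 1) → ℝ) => U x.1 - U (x.1 - δ x.2)) :=
    (hUc.measurable.comp measurable_fst).sub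
      (hUc.measurable.comp (measurable_fst.sub (hδmeas.comp measurable_snd)))
  -- the basic lintegral estimate
  have hI : eLpNorm (deriv U) P volume ^ p = ∫⁻ t, (‖deriv U t‖₊ : ℝ≥0∞) ^ p := by
    rw [eLpNorm_eq_lintegral_rpow_enorm_toReal hP0 hPt, hPr, ← ENNReal.rpow_mul,
      one_div_mul_cancel hp0.ne', ENNReal.rpow_one]
    rfl
  have hJ : eLpNorm δ P volume ^ p = ∫⁻ y, (‖δ y‖₊ : ℝ≥0∞) ^ p := by
    rw [eLpNorm_eq_lintegral_rpow_enorm_toReal hP0 hPt, hPr, ← ENNReal.rpow_mul,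
      one_div_mul_cancel hp0.ne', ENNReal.rpow_one]
    rfl
  have hInt : ∫⁻ z : ℝ × (Fin (d - 1) → ℝ), (‖U z.1 - U (z.1 - δ z.2)‖₊ : ℝ≥0∞) ^ p
      ≤ (∫⁻ y, (‖δ y‖₊ : ℝ≥0∞) ^ p) * ∫⁻ t, (‖deriv U t‖₊ : ℝ≥0∞) ^ p := by
    have hmeas : AEMeasurable
        (fun z : ℝ × (Fin (d - 1) → ℝ) => (‖U z.1 - U (z.1 - δ z.2)‖₊ : ℝ≥0∞) ^ p)
        ((volume : Measure ℝ).prod (volume : Measure (Fin (d - 1) → ℝ))) :=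
      (ENNReal.continuous_rpow_const.measurable.comp hFmeas.nnnorm.coe_nnreal_ennreal).aemeasurable
    have hItop : (∫⁻ t, (‖deriv U t‖₊ : ℝ≥0∞) ^ p) ≠ ⊤ := by
      rw [← hI]
      exact (ENNReal.rpow_lt_top_of_nonneg hp0.le hU'.eLpNorm_ne_top).ne
    rw [Measure.volume_eq_prod, lintegral_prod_symm _ hmeas]
    calc ∫⁻ y, ∫⁻ x, (‖U x - U (x - δ y)‖₊ : ℝ≥0∞) ^ p
        ≤ ∫⁻ y, ENNReal.ofReal |δ y| ^ p * ∫⁻ t, (‖deriv U t‖₊ : ℝ≥0∞) ^ p :=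
          lintegral_mono fun y => oneD_shift hp U hU (δ y)
      _ = ∫⁻ y, (‖δ y‖₊ : ℝ≥0∞) ^ p * ∫⁻ t, (‖deriv U t‖₊ : ℝ≥0∞) ^ p := by
          simp_rw [← enorm_eq_nnnorm, Real.enorm_eq_ofReal_abs]
      _ = (∫⁻ y, (‖δ y‖₊ : ℝ≥0∞) ^ p) * ∫⁻ t, (‖deriv U t‖₊ : ℝ≥0∞) ^ p :=
          lintegral_mul_const' _ _ hItop
  have hbound : eLpNorm (fun x : ℝ × (Fin (d - 1) → ℝ) => U x.1 - U (x.1 - δ x.2)) P volume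
      ≤ eLpNorm (deriv U) P volume * eLpNorm δ P volume := by
    rw [eLpNorm_eq_lintegral_rpow_enorm_toReal hP0 hPt, hPr]
    calc (∫⁻ z : ℝ × (Fin (d - 1) → ℝ), (‖U z.1 - U (z.1 - δ z.2)‖₊ : ℝ≥0∞) ^ p) ^ (1 / p)
        ≤ ((∫⁻ y, (‖δ y‖₊ : ℝ≥0∞) ^ p) * ∫⁻ t, (‖deriv U t‖₊ : ℝ≥0∞) ^ p) ^ (1 / p) :=
          ENNReal.rpow_le_rpow hInt (by positivity)
      _ = eLpNorm (deriv U) P volume * eLpNorm δ P volume := by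
          rw [← hJ, ← hI, ← ENNReal.mul_rpow_of_nonneg _ _ hp0.le, ← ENNReal.rpow_mul,
            mul_one_div_cancel hp0.ne', ENNReal.rpow_one, mul_comm]
  refine ⟨⟨hFmeas.aestronglyMeasurable, ?_⟩, hbound⟩
  exact hbound.trans_lt (ENNReal.mul_lt_top hU'.eLpNorm_lt_top hδ.eLpNorm_lt_top)
end

section
/- Second-order Chapman–Enskog solvability identity (Appendix A, Claim, second order): In the block-matrix setup below, for all indices j, k, the first (scalar) component of the vector i · (a*_j · I − A^j) · V¹_k ∈ ℂ^{1+r} equals f^j_v · q_v⁻¹ · (g^k_u − g^k_v q_v⁻¹ q_u + a*_k · q_v⁻¹ q_u). Consequently, setting b*_{jk} := −(1/2) · ( f^j_v q_v⁻¹ (g^k_u − g^k_v q_v⁻¹ q_u + a*_k q_v⁻¹ q_u) + f^k_v q_v⁻¹ (g^j_u − g^j_v q_v⁻¹ q_u + a*_j q_v⁻¹ q_u) ), the first component of 2·b*_{jk}·V⁰ + i (a*_j I − A^j) V¹_k + i (a*_k I − A^k) V¹_j is zero. -/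
open Matrix

lemma key_ce (r : ℕ) (a fu : ℂ) (fv : Matrix Unit (Fin r) ℂ) (gu : Matrix (Fin r) Unit ℂ)
    (gv : Matrix (Fin r) (Fin r) ℂ) (M : Matrix (Fin r) Unit ℂ) :
    ((a • (1 : Matrix (Unit ⊕ Fin r) (Unit ⊕ Fin r) ℂ)
        - Matrix.fromBlocks (Matrix.of fun _ _ => fu) fv gu gv) *ᵥ
        Sum.elim (fun _ => 1) (fun i => M i ())) (Sum.inl ())
      = a - fu - (fv * M) () () := by
  simp [Matrix.mulVec, dotProduct, Matrix.fromBlocks, Matrix.one_apply,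
    Matrix.mul_apply, Fintype.sum_sum_type, sub_mul, Finset.sum_sub_distrib]
  ring

lemma first_ce (r : ℕ) (fu : ℂ) (fv : Matrix Unit (Fin r) ℂ) (gu gu' : Matrix (Fin r) Unit ℂ)
    (gv gv' : Matrix (Fin r) (Fin r) ℂ) (q_u : Matrix (Fin r) Unit ℂ)
    (q_v : Matrix (Fin r) (Fin r) ℂ) (a' : ℂ) :
    (Complex.I • (((fu - (fv * q_v⁻¹ * q_u) () ()) • (1 : Matrix (Unit ⊕ Fin r) (Unit ⊕ Fin r) ℂ)
        - Matrix.fromBlocks (Matrix.of fun _ _ => fu) fv gu gv) *ᵥ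
        Sum.elim (fun _ => 1) (fun i =>
          (-(q_v⁻¹ * q_u) +
            Complex.I • (q_v⁻¹ * (gu' - gv' * q_v⁻¹ * q_u + a' • (q_v⁻¹ * q_u)))) i ()))) (Sum.inl ())
      = (fv * q_v⁻¹ * (gu' - gv' * q_v⁻¹ * q_u + a' • (q_v⁻¹ * q_u))) () () := by
  rw [Pi.smul_apply, key_ce]
  have h : fv * (-(q_v⁻¹ * q_u) +
      Complex.I • (q_v⁻¹ * (gu' - gv' * q_v⁻¹ * q_u + a' • (q_v⁻¹ * q_u))))
      = -(fv * q_v⁻¹ * q_u) +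
        Complex.I • (fv * q_v⁻¹ * (gu' - gv' * q_v⁻¹ * q_u + a' • (q_v⁻¹ * q_u))) := by
    simp only [Matrix.mul_add, Matrix.mul_neg, Matrix.mul_smul, Matrix.mul_assoc]
  rw [h]
  simp only [Matrix.add_apply, Matrix.neg_apply, Matrix.smul_apply, smul_eq_mul]
  have := Complex.I_mul_I
  ring_nf
  rw [Complex.I_sq]
  ring

/-- Second-order Chapman–Enskog solvability identity: the first (scalar) component of
`i (a*_j I − A^j) V¹_k` equals `f^j_v q_v⁻¹ (g^k_u − g^k_v q_v⁻¹ q_u + a*_k q_v⁻¹ q_u)`,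
and consequently the first component of
`2 b*_{jk} V⁰ + i (a*_j I − A^j) V¹_k + i (a*_k I − A^k) V¹_j` vanishes. -/
theorem chapman_enskog_second_order (r : ℕ) (hr : 1 ≤ r)
    (fj_u fk_u : ℂ) (fj_v fk_v : Matrix Unit (Fin r) ℂ)
    (gj_u gk_u : Matrix (Fin r) Unit ℂ) (gj_v gk_v : Matrix (Fin r) (Fin r) ℂ)
    (q_u : Matrix (Fin r) Unit ℂ) (q_v : Matrix (Fin r) (Fin r) ℂ)
    (hq : IsUnit q_v.det) :
    let Aj : Matrix (Unit ⊕ Fin r) (Unit ⊕ Fin r) ℂ :=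
      Matrix.fromBlocks (Matrix.of fun _ _ => fj_u) fj_v gj_u gj_v
    let Ak : Matrix (Unit ⊕ Fin r) (Unit ⊕ Fin r) ℂ :=
      Matrix.fromBlocks (Matrix.of fun _ _ => fk_u) fk_v gk_u gk_v
    let aj : ℂ := fj_u - (fj_v * q_v⁻¹ * q_u) () ()
    let ak : ℂ := fk_u - (fk_v * q_v⁻¹ * q_u) () ()
    let V0 : (Unit ⊕ Fin r) → ℂ :=
      Sum.elim (fun _ => 1) (fun i => (-(q_v⁻¹ * q_u)) i ())
    let V1j : (Unit ⊕ Fin r) → ℂ :=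
      Sum.elim (fun _ => 1) (fun i =>
        (-(q_v⁻¹ * q_u) +
          Complex.I • (q_v⁻¹ * (gj_u - gj_v * q_v⁻¹ * q_u + aj • (q_v⁻¹ * q_u)))) i ())
    let V1k : (Unit ⊕ Fin r) → ℂ :=
      Sum.elim (fun _ => 1) (fun i =>
        (-(q_v⁻¹ * q_u) +
          Complex.I • (q_v⁻¹ * (gk_u - gk_v * q_v⁻¹ * q_u + ak • (q_v⁻¹ * q_u)))) i ())
    let bjk : ℂ := -(1 / 2) *
      ((fj_v * q_v⁻¹ * (gk_u - gk_v * q_v⁻¹ * q_u + ak • (q_v⁻¹ * q_u))) () () +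
       (fk_v * q_v⁻¹ * (gj_u - gj_v * q_v⁻¹ * q_u + aj • (q_v⁻¹ * q_u))) () ())
    (Complex.I • ((aj • (1 : Matrix (Unit ⊕ Fin r) (Unit ⊕ Fin r) ℂ) - Aj) *ᵥ V1k))
        (Sum.inl ())
      = (fj_v * q_v⁻¹ * (gk_u - gk_v * q_v⁻¹ * q_u + ak • (q_v⁻¹ * q_u))) () () ∧
    ((2 * bjk) • V0 +
        Complex.I • ((aj • (1 : Matrix (Unit ⊕ Fin r) (Unit ⊕ Fin r) ℂ) - Aj) *ᵥ V1k) +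
        Complex.I • ((ak • (1 : Matrix (Unit ⊕ Fin r) (Unit ⊕ Fin r) ℂ) - Ak) *ᵥ V1j))
        (Sum.inl ()) = 0 := by
  intro Aj Ak aj ak V0 V1j V1k bjk
  have h1 := first_ce r fj_u fj_v gj_u gk_u gj_v gk_v q_u q_v ak
  have h2 := first_ce r fk_u fk_v gk_u gj_u gk_v gj_v q_u q_v aj
  refine ⟨h1, ?_⟩
  simp only [Pi.add_apply, Pi.smul_apply, Sum.elim_inl, smul_eq_mul, V0] at *
  rw [h1, h2]
  simp only [bjk]
  ring
end
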